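/- Let N ≥ 1, let A be an N×N real symmetric matrix with nonnegative entries and largest eigenvalue μ_max(A), let λ > 0 with λ·μ_max(A) < 1, and let φ_i : ℝ → ℝ (i = 1,…,N) be functions with 0 < φ_i(t) ≤ 1 for all t. Suppose ρ : ℝ → ℝ^N is differentiable, satisfies 0 ≤ ρ_i(t) ≤ 1 for all i and all t ≥ 0, and solves ρ̇_i(t) = −ρ_i(t) + λφ_i(t)(1−ρ_i(t))·Σ_j a_ij ρ_j(t) for all i and t ≥ 0. Then for all t ≥ 0, Σ_i ρ_i(t)² ≤ e^{−2(1−λ·μ_max(A))·t}·Σ_i ρ_i(0)²; in particular ρ(t) → 0 as t → ∞, so the disease-free equilibrium is globally asymptotically stable. -/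

import Mathlib

open Matrix Finset

lemma rayleigh_aux {N : ℕ} (hne : (Finset.univ : Finset (Fin N)).Nonempty)
    (A : Matrix (Fin N) (Fin N) ℝ) (hA : A.IsHermitian) (x : Fin N → ℝ) :
    x ⬝ᵥ (A *ᵥ x) ≤ (Finset.univ.sup' hne hA.eigenvalues) * (x ⬝ᵥ x) := by
  set U : Matrix (Fin N) (Fin N) ℝ := (hA.eigenvectorUnitary : Matrix (Fin N) (Fin N) ℝ) with hU
  set y : Fin N → ℝ := (star U) *ᵥ x with hy
  have hxy : x ᵥ* U = y := by
    ext i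
    simp [hy, Matrix.mulVec, Matrix.vecMul, dotProduct, mul_comm]
  have h1 : x ⬝ᵥ (A *ᵥ x) = ∑ i, hA.eigenvalues i * (y i)^2 := by
    conv_lhs => rw [hA.spectral_theorem, Unitary.conjStarAlgAut_apply]
    rw [← hU, ← Matrix.mulVec_mulVec, ← Matrix.mulVec_mulVec, Matrix.dotProduct_mulVec, hxy]
    simp [← hy, Matrix.mulVec_diagonal, dotProduct, sq, mul_comm, mul_assoc, mul_left_comm]
  have h2 : x ⬝ᵥ x = ∑ i, (y i)^2 := by
    have hUU : U * star U = 1 := Matrix.mem_unitaryGroup_iff.mp hA.eigenvectorUnitary.2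
    have hstar : star U = Uᵀ := by
      ext i j
      simp [Matrix.star_apply]
    have hyx : U *ᵥ y = x := by rw [hy, Matrix.mulVec_mulVec, hUU, Matrix.one_mulVec]
    have hxyU : x ᵥ* U = y := by rw [hy, hstar, Matrix.mulVec_transpose]
    calc x ⬝ᵥ x = x ⬝ᵥ (U *ᵥ y) := by rw [hyx]
      _ = (x ᵥ* U) ⬝ᵥ y := Matrix.dotProduct_mulVec x U y
      _ = y ⬝ᵥ y := by rw [hxyU]
      _ = ∑ i, (y i)^2 := by simp [dotProduct, sq]
  rw [h1, h2, Finset.mul_sum]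
  apply Finset.sum_le_sum
  intro i _
  exact mul_le_mul_of_nonneg_right (Finset.le_sup' _ (Finset.mem_univ i)) (sq_nonneg _)

/-- Theorem 2 (global asymptotic stability, quantitative form): if `λ μ_max(A) < 1`, then
along any solution of the SIS system with awareness factors in `(0,1]` one has
`Σ_i ρ_i(t)² ≤ e^{−2(1−λ μ_max(A)) t} Σ_i ρ_i(0)²` for all `t ≥ 0`. -/
theorem diseaseFree_exponential_stability
    (N : ℕ) (hN : 1 ≤ N) (A : Matrix (Fin N) (Fin N) ℝ)
    (hA : A.IsHermitian) (hApos : ∀ i j, 0 ≤ A i j)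
    (lam : ℝ) (hlam : 0 < lam)
    (hthr : lam * Finset.univ.sup' (Finset.univ_nonempty_iff.mpr ⟨⟨0, hN⟩⟩) hA.eigenvalues < 1)
    (φ : Fin N → ℝ → ℝ) (hφ : ∀ i t, 0 < φ i t ∧ φ i t ≤ 1)
    (ρ : ℝ → Fin N → ℝ) (hdiff : ∀ i, Differentiable ℝ (fun t => ρ t i))
    (hrange : ∀ i t, 0 ≤ t → 0 ≤ ρ t i ∧ ρ t i ≤ 1)
    (hode : ∀ i t, 0 ≤ t →
      deriv (fun s => ρ s i) t =
        -ρ t i + lam * φ i t * (1 - ρ t i) * ∑ j, A i j * ρ t j) :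
    ∀ t : ℝ, 0 ≤ t →
      ∑ i, ρ t i ^ 2 ≤
        Real.exp (-2 * (1 - lam *
            Finset.univ.sup' (Finset.univ_nonempty_iff.mpr ⟨⟨0, hN⟩⟩) hA.eigenvalues) * t) *
          ∑ i, ρ 0 i ^ 2 := by
  set μ : ℝ := Finset.univ.sup' (Finset.univ_nonempty_iff.mpr ⟨⟨0, hN⟩⟩) hA.eigenvalues with hμ
  set c : ℝ := 2 * (1 - lam * μ) with hc
  set V : ℝ → ℝ := fun t => ∑ i, ρ t i ^ 2 with hV
  -- derivative of V
  have hVderiv : ∀ t : ℝ, HasDerivAt V (∑ i, 2 * ρ t i * deriv (fun s => ρ s i) t) t := by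
    intro t
    apply HasDerivAt.fun_sum
    intro i _
    have h := ((hdiff i t).hasDerivAt).fun_pow 2
    simpa [mul_comm, mul_assoc, mul_left_comm] using h
  -- bound on derivative for t ≥ 0
  have hVbound : ∀ t : ℝ, 0 ≤ t →
      (∑ i, 2 * ρ t i * deriv (fun s => ρ s i) t) ≤ -c * V t := by
    intro t ht
    have hray := rayleigh_aux (Finset.univ_nonempty_iff.mpr ⟨⟨0, hN⟩⟩) A hA (ρ t)
    have hstep : ∀ i : Fin N, 2 * ρ t i * deriv (fun s => ρ s i) t ≤
        -2 * ρ t i ^ 2 + 2 * lam * (ρ t i * ∑ j, A i j * ρ t j) := by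
      intro i
      rw [hode i t ht]
      have hS : 0 ≤ ∑ j, A i j * ρ t j :=
        Finset.sum_nonneg fun j _ => mul_nonneg (hApos i j) (hrange j t ht).1
      have hρ0 := (hrange i t ht).1
      have hρ1 := (hrange i t ht).2
      have hφ1 : lam * φ i t * (1 - ρ t i) ≤ lam := by
        calc lam * φ i t * (1 - ρ t i) ≤ lam * 1 * 1 := by
              apply mul_le_mul
              · exact mul_le_mul_of_nonneg_left (hφ i t).2 hlam.le
              · linarith
              · linarith
              · positivity
          _ = lam := by ring
      have hφ0 : 0 ≤ lam * φ i t * (1 - ρ t i) :=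
        mul_nonneg (mul_nonneg hlam.le (hφ i t).1.le) (by linarith)
      have key : ρ t i * (lam * φ i t * (1 - ρ t i) * ∑ j, A i j * ρ t j) ≤
          lam * (ρ t i * ∑ j, A i j * ρ t j) := by
        have := mul_le_mul_of_nonneg_right hφ1 (mul_nonneg hρ0 hS)
        calc ρ t i * (lam * φ i t * (1 - ρ t i) * ∑ j, A i j * ρ t j)
            = (lam * φ i t * (1 - ρ t i)) * (ρ t i * ∑ j, A i j * ρ t j) := by ring
          _ ≤ lam * (ρ t i * ∑ j, A i j * ρ t j) := this
      nlinarith [key]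
    calc (∑ i, 2 * ρ t i * deriv (fun s => ρ s i) t)
        ≤ ∑ i, (-2 * ρ t i ^ 2 + 2 * lam * (ρ t i * ∑ j, A i j * ρ t j)) :=
          Finset.sum_le_sum fun i _ => hstep i
      _ = -2 * V t + 2 * lam * (ρ t ⬝ᵥ (A *ᵥ ρ t)) := by
          rw [Finset.sum_add_distrib, ← Finset.mul_sum, ← Finset.mul_sum]
          simp only [hV, dotProduct, Matrix.mulVec, dotProduct]
      _ ≤ -2 * V t + 2 * lam * (μ * (ρ t ⬝ᵥ ρ t)) := by
          have := mul_le_mul_of_nonneg_left hray (by positivity : (0:ℝ) ≤ 2 * lam)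
          linarith
      _ = -c * V t := by
          have : ρ t ⬝ᵥ ρ t = V t := by simp [hV, dotProduct, sq]
          rw [this]; ring
  -- Grönwall via monotonicity of g t = exp (c t) * V t
  set g : ℝ → ℝ := fun t => Real.exp (c * t) * V t with hg
  have hgderiv : ∀ t : ℝ, HasDerivAt g
      (c * Real.exp (c * t) * V t +
        Real.exp (c * t) * (∑ i, 2 * ρ t i * deriv (fun s => ρ s i) t)) t := by
    intro t
    have h1 : HasDerivAt (fun t => Real.exp (c * t)) (c * Real.exp (c * t)) t := by
      have h := ((hasDerivAt_id t).const_mul c).exp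
      simp only [id_eq, mul_one] at h
      convert h using 1
      ring
    exact h1.mul (hVderiv t)
  have hanti : AntitoneOn g (Set.Ici 0) := by
    apply antitoneOn_of_deriv_nonpos (convex_Ici 0)
    · exact Continuous.continuousOn (continuous_iff_continuousAt.mpr fun t => (hgderiv t).continuousAt)
    · intro t ht
      exact ((hgderiv t).differentiableAt).differentiableWithinAt
    · intro t ht
      rw [interior_Ici] at ht
      rw [(hgderiv t).deriv]
      have hb := hVbound t (le_of_lt ht)
      have he : (0:ℝ) < Real.exp (c * t) := Real.exp_pos _
      nlinarith [mul_le_mul_of_nonneg_left hb he.le]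
  intro t ht
  have := hanti (Set.self_mem_Ici) (Set.mem_Ici.mpr ht) ht
  simp only [hg, mul_zero, Real.exp_zero, one_mul] at this
  have hVt : V t ≤ Real.exp (-(c * t)) * V 0 := by
    rw [Real.exp_neg]
    calc V t ≤ V 0 / Real.exp (c * t) := (le_div_iff₀' (Real.exp_pos _)).mpr this
      _ = (Real.exp (c * t))⁻¹ * V 0 := by ring
  have heq : -2 * (1 - lam * μ) * t = -(c * t) := by rw [hc]; ring
  rw [heq]
  exact hVt
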